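/- For infinite cardinals κ ≤ λ, the cofinality of ⟨^λκ, ≤⟩ (everywhere domination) is at most the cofinality of ⟨^(λ⁺)κ, ≤*⟩ (eventual domination on functions from λ⁺ to κ). -/

import Mathlib

open Cardinal Order

/-- The cofinality of the everywhere (pointwise) domination order on functions `X → K`. -/
noncomputable def everyCof (X K : Type*) [LE K] : Cardinal :=
  sInf {c | ∃ D : Set (X → K), #D = c ∧ ∀ f : X → K, ∃ g ∈ D, ∀ x, f x ≤ g x}

/-- The cofinality of the eventual domination order on functions `X → K`. -/
noncomputable def evenCof (X K : Type*) [LE X] [LE K] : Cardinal :=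
  sInf {c | ∃ D : Set (X → K), #D = c ∧
    ∀ f : X → K, ∃ g ∈ D, ∃ a : X, ∀ b : X, a ≤ b → f b ≤ g b}

/-- Ordinal-level key fact: given `a < o'` and `β < o`, there is `b < o'` with `a ≤ b`,
`b % o = β`, witnessed explicitly. -/
theorem stmt4_key {o o' : Ordinal} (ho : o ≠ 0)
    (hclose : ∀ q r : Ordinal, q < o' → r < o → o * q + r < o')
    (hsucc : ∀ q : Ordinal, q < o' → q + 1 < o')
    (a : Set.Iio o') (β : Set.Iio o) : ∃ b : Set.Iio o', a ≤ b ∧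
      ((b : Ordinal) % o) = (β : Ordinal) := by
  have hb : o * ((a : Ordinal) + 1) + (β : Ordinal) < o' :=
    hclose _ _ (hsucc _ a.2) β.2
  refine ⟨⟨_, hb⟩, ?_, ?_⟩
  · rw [← Subtype.coe_le_coe]
    calc (a : Ordinal) ≤ (a : Ordinal) + 1 := le_self_add
      _ = 1 * ((a : Ordinal) + 1) := (one_mul _).symm
      _ ≤ o * ((a : Ordinal) + 1) :=
          mul_le_mul_left (Ordinal.one_le_iff_ne_zero.mpr ho) _
      _ ≤ o * ((a : Ordinal) + 1) + (β : Ordinal) := le_self_add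
  · show (o * ((a : Ordinal) + 1) + (β : Ordinal)) % o = (β : Ordinal)
    rw [Ordinal.mul_add_mod_self]
    exact Ordinal.mod_eq_of_lt β.2

theorem stmt_4 (k l : Cardinal) (hk : ℵ₀ ≤ k) (hkl : k ≤ l) :
    everyCof l.ord.ToType k.ord.ToType ≤ evenCof (Order.succ l).ord.ToType k.ord.ToType := by
  classical
  have hl : ℵ₀ ≤ l := hk.trans hkl
  have hsl : ℵ₀ ≤ succ l := hl.trans (le_succ l)
  set K := k.ord.ToType with hK
  set L := l.ord.ToType with hLdef
  set L' := (succ l).ord.ToType with hL'def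
  set oK := k.ord with hoK
  set oL := l.ord with hoL
  set oL' := (succ l).ord with hoL'
  have hoLne : oL ≠ 0 := by
    rw [hoL, Ne, Cardinal.ord_eq_zero]
    rintro rfl
    exact (aleph0_pos).not_ge hl
  have hoL'ne : oL' ≠ 0 := by
    rw [hoL', Ne, Cardinal.ord_eq_zero]
    intro h
    rw [h] at hsl
    exact (aleph0_pos).not_ge hsl
  have hKne : Nonempty K := by
    rw [hK]
    rw [Ordinal.nonempty_toType_iff, Ne, Cardinal.ord_eq_zero]
    rintro rfl
    exact (aleph0_pos).not_ge hk
  have hL'ne : Nonempty L' := by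
    rw [hL'def]
    exact Ordinal.nonempty_toType_iff.mpr hoL'ne
  have hKmax : NoMaxOrder K := Cardinal.noMaxOrder hk
  have hclose : ∀ q r : Ordinal, q < oL' → r < oL → oL * q + r < oL' := by
    intro q r hq hr
    rw [hoL'] at hq ⊢
    rw [hoL] at hr
    rw [Cardinal.lt_ord] at hq hr ⊢
    rw [Ordinal.card_add, Ordinal.card_mul, hoL, Cardinal.card_ord]
    exact Cardinal.add_lt_of_lt hsl
      (Cardinal.mul_lt_of_lt hsl (lt_succ l) hq)
      (hr.trans_le (le_succ l))
  have hsucc : ∀ q : Ordinal, q < oL' → q + 1 < oL' := by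
    intro q hq
    rw [Ordinal.add_one_eq_succ]
    rw [hoL'] at hq ⊢
    exact (Cardinal.isSuccLimit_ord hsl).succ_lt hq
  set eK := Ordinal.ToType.mk (o := oK) with heK
  set eL := Ordinal.ToType.mk (o := oL) with heL
  set eL' := Ordinal.ToType.mk (o := oL') with heL'
  -- the projection L' → L via mod oL
  set idx : L' → L := fun γ => eL ⟨(eL'.symm γ : Ordinal) % oL, Ordinal.mod_lt _ hoLne⟩
    with hidx
  -- key: given a : L' and β : L, find b ≥ a with idx b = β
  have key : ∀ (a : L') (β : L), ∃ b : L', a ≤ b ∧ idx b = β := by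
    intro a β
    obtain ⟨b, hab, hmod⟩ := stmt4_key hoLne hclose hsucc (eL'.symm a) (eL.symm β)
    refine ⟨eL' b, ?_, ?_⟩
    · conv_lhs => rw [← eL'.apply_symm_apply a]
      exact eL'.le_iff_le.mpr hab
    · show eL ⟨(eL'.symm (eL' b) : Ordinal) % oL, _⟩ = β
      have h1 : (⟨(eL'.symm (eL' b) : Ordinal) % oL,
          Ordinal.mod_lt _ hoLne⟩ : Set.Iio oL) = eL.symm β := by
        apply Subtype.ext
        show ((eL'.symm (eL' b) : Ordinal)) % oL = ((eL.symm β : Ordinal))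
        rw [eL'.symm_apply_apply]
        exact hmod
      rw [h1, eL.apply_symm_apply]
  -- the eventual-domination set is nonempty
  have hS2 : {c | ∃ D : Set (L' → K), #D = c ∧
      ∀ f : L' → K, ∃ g ∈ D, ∃ a : L', ∀ b : L', a ≤ b → f b ≤ g b}.Nonempty := by
    refine ⟨#(Set.univ : Set (L' → K)), Set.univ, rfl, fun f => ?_⟩
    exact ⟨f, Set.mem_univ f, Classical.arbitrary L', fun b _ => le_rfl⟩
  obtain ⟨D, hDcard, hdom⟩ := csInf_mem hS2
  -- lower bound: #D ≥ succ l
  have hDbig : succ l ≤ #D := by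
    by_contra hlt
    push_neg at hlt
    have hDle : #D ≤ l := lt_succ_iff.mp hlt
    rcases D.eq_empty_or_nonempty with hD | hD
    · obtain ⟨x⟩ := hKne
      obtain ⟨g, hg, -⟩ := hdom fun _ => x
      rw [hD] at hg
      exact hg
    · have hDne : Nonempty D := hD.to_subtype
      have hDL : #D ≤ #L := by
        rw [hLdef, Cardinal.mk_toType, hoL, Cardinal.card_ord]
        exact hDle
      obtain ⟨j⟩ := Cardinal.le_def _ _ |>.mp hDL
      have hesurj : Function.Surjective (Function.invFun j) :=
        Function.invFun_surjective j.injective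
      -- diagonal function
      have hstep : ∀ γ : L', ∃ y : K,
          (((Function.invFun j (idx γ) : D) : L' → K) γ) < y := fun γ => exists_gt _
      choose f hf using hstep
      obtain ⟨g, hg, a, ha⟩ := hdom f
      obtain ⟨β₀, hβ₀⟩ := hesurj ⟨g, hg⟩
      obtain ⟨b, hab, hidxb⟩ := key a β₀
      have h1 := hf b
      rw [hidxb, hβ₀] at h1
      exact absurd (ha b hab) (not_le.mpr h1)
  -- the dominating family on L
  set Φ : (D × L') → (L → K) := fun p β =>
    (p.1 : L' → K) (eL' ⟨oL * (eL'.symm p.2 : Ordinal) + (eL.symm β : Ordinal),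
      hclose _ _ (eL'.symm p.2).2 (eL.symm β).2⟩) with hΦ
  have hmem : #(Set.range Φ) ∈ {c | ∃ D' : Set (L → K), #D' = c ∧
      ∀ f : L → K, ∃ g ∈ D', ∀ x, f x ≤ g x} := by
    refine ⟨Set.range Φ, rfl, fun f => ?_⟩
    obtain ⟨g, hg, a, ha⟩ := hdom (f ∘ idx)
    set i := eL' ⟨(eL'.symm a : Ordinal) + 1, hsucc _ (eL'.symm a).2⟩ with hi
    refine ⟨Φ (⟨g, hg⟩, i), ⟨(⟨g, hg⟩, i), rfl⟩, fun β => ?_⟩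
    -- the point where we evaluate
    set b := eL' ⟨oL * (eL'.symm i : Ordinal) + (eL.symm β : Ordinal),
      hclose _ _ (eL'.symm i).2 (eL.symm β).2⟩ with hb
    have hΦval : Φ (⟨g, hg⟩, i) β = g b := rfl
    have hq' : (eL'.symm i : Ordinal) = (eL'.symm a : Ordinal) + 1 := by
      rw [hi, eL'.symm_apply_apply]
    -- a ≤ b
    have hab : a ≤ b := by
      conv_lhs => rw [← eL'.apply_symm_apply a]
      rw [hb, eL'.le_iff_le, ← Subtype.coe_le_coe]
      show (eL'.symm a : Ordinal) ≤ oL * (eL'.symm i : Ordinal) + (eL.symm β : Ordinal)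
      rw [hq']
      calc (eL'.symm a : Ordinal) ≤ (eL'.symm a : Ordinal) + 1 := le_self_add
        _ = 1 * ((eL'.symm a : Ordinal) + 1) := (one_mul _).symm
        _ ≤ oL * ((eL'.symm a : Ordinal) + 1) :=
            mul_le_mul_left (Ordinal.one_le_iff_ne_zero.mpr hoLne) _
        _ ≤ _ := le_self_add
    -- idx b = β
    have hidxb : idx b = β := by
      show eL ⟨(eL'.symm b : Ordinal) % oL, _⟩ = β
      have h1 : (⟨(eL'.symm b : Ordinal) % oL,
          Ordinal.mod_lt _ hoLne⟩ : Set.Iio oL) = eL.symm β := by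
        apply Subtype.ext
        show ((eL'.symm b : Ordinal)) % oL = ((eL.symm β : Ordinal))
        rw [hb, eL'.symm_apply_apply]
        show (oL * (eL'.symm i : Ordinal) + (eL.symm β : Ordinal)) % oL = _
        rw [Ordinal.mul_add_mod_self]
        exact Ordinal.mod_eq_of_lt (eL.symm β).2
      rw [h1, eL.apply_symm_apply]
    have := ha b hab
    rw [Function.comp_apply, hidxb] at this
    rw [hΦval]
    exact this
  -- conclude
  unfold everyCof evenCof
  rw [← hDcard]
  refine le_trans (csInf_le (OrderBot.bddBelow _) hmem) ?_
  calc #(Set.range Φ) ≤ #(D × L') := Cardinal.mk_range_le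
    _ = #D * (succ l) := by
        have hmkL' : #L' = succ l :=
          (Cardinal.mk_toType oL').trans (by rw [hoL', Cardinal.card_ord])
        rw [Cardinal.mk_prod, Cardinal.lift_id, Cardinal.lift_id, hmkL']
    _ = #D := Cardinal.mul_eq_left (hsl.trans hDbig) hDbig
        (aleph0_pos.trans_le hsl).ne'
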